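/- Let P ∈ ℚ[t_1,…,t_r] be a nonzero polynomial, let C ⊆ ℝ^r be a convex cone whose interior contains the first standard basis vector e_1, and let p ∈ ℝ^r. If P(t) ≥ 0 for every lattice point t ∈ ℤ^r with t ∈ p + C, then the coefficient of the leading monomial of P with respect to the graded lexicographic order with t_1 > t_2 > … > t_r is positive. -/

import Mathlib

open MvPolynomial Finset

/-- Graded lexicographic order on exponent vectors (with `t_1 > t_2 > … > t_r`, i.e.
smaller indices are more significant): first compare total degree, then lexicographically. -/
def glexLt {r : ℕ} (a b : Fin r →₀ ℕ) : Prop :=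
  (∑ i, a i) < (∑ i, b i) ∨ ((∑ i, a i) = (∑ i, b i) ∧ Finsupp.Lex (· < ·) (· < ·) a b)

private def gw (r B : ℕ) (i : Fin r) : ℕ := B ^ r + B ^ (r - 1 - i.1)

private def gW (r B : ℕ) (f : Fin r →₀ ℕ) : ℕ := ∑ i, f i * gw r B i

private lemma coord_le_sum {r : ℕ} (ν : Fin r →₀ ℕ) (i : Fin r) :
    ν i ≤ ν.sum fun _ e => e := by
  by_cases h : i ∈ ν.support
  · exact Finset.single_le_sum (fun _ _ => Nat.zero_le _) h
  · simp [Finsupp.notMem_support_iff.1 h]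

private lemma glex_tri {r : ℕ} (f g : Fin r →₀ ℕ) (h : f ≠ g) : glexLt f g ∨ glexLt g f := by
  rcases lt_trichotomy (∑ i, f i) (∑ i, g i) with hs | hs | hs
  · exact Or.inl (Or.inl hs)
  · rcases lt_or_gt_of_ne (show toLex f ≠ toLex g from fun hh => h (by simpa using hh)) with hl | hl
    · exact Or.inl (Or.inr ⟨hs, hl⟩)
    · exact Or.inr (Or.inr ⟨hs.symm, hl⟩)
  · exact Or.inr (Or.inl hs)

private lemma gW_lt {r D B : ℕ} (hr : 0 < r) (hB : r * D < B) (hB2 : 2 ≤ B)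
    (f g : Fin r →₀ ℕ) (hf : ∀ i, f i ≤ D) (h : glexLt f g) :
    gW r B f < gW r B g := by
  have hB1 : (1:ℤ) ≤ (B:ℤ) := by exact_mod_cast hB2.trans' (by norm_num)
  have hB0 : (0:ℤ) ≤ (B:ℤ) := by linarith
  have key : (0:ℤ) < ∑ i, ((g i : ℤ) - (f i : ℤ)) * ((B:ℤ)^r + (B:ℤ)^(r-1-i.1)) := by
    rcases h with hlt | ⟨hs, hlex⟩
    · -- total degree case
      have hstep : ∀ i : Fin r,
          ((g i:ℤ) - f i) * (B:ℤ)^r - (D:ℤ) * (B:ℤ)^(r-1)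
            ≤ ((g i:ℤ) - f i) * ((B:ℤ)^r + (B:ℤ)^(r-1-i.1)) := by
        intro i
        have e1 : (B:ℤ)^(r-1-i.1) ≤ (B:ℤ)^(r-1) := pow_le_pow_right₀ hB1 (by omega)
        have e0 : (0:ℤ) ≤ (B:ℤ)^(r-1-i.1) := pow_nonneg hB0 _
        have hfD : (f i : ℤ) ≤ D := by exact_mod_cast hf i
        have hg0 : (0:ℤ) ≤ (g i : ℤ) := by positivity
        nlinarith
      have hsum := Finset.sum_le_sum (fun i (_ : i ∈ Finset.univ) => hstep i)
      have hL : ∑ i : Fin r, (((g i:ℤ) - f i) * (B:ℤ)^r - (D:ℤ) * (B:ℤ)^(r-1))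
          = (∑ i : Fin r, ((g i:ℤ) - f i)) * (B:ℤ)^r - (r:ℤ) * ((D:ℤ) * (B:ℤ)^(r-1)) := by
        rw [Finset.sum_sub_distrib, ← Finset.sum_mul, Finset.sum_const, card_univ,
          Fintype.card_fin, nsmul_eq_mul]
      have hdiff : (1:ℤ) ≤ ∑ i : Fin r, ((g i:ℤ) - f i) := by
        rw [Finset.sum_sub_distrib]
        have h1 : (∑ i : Fin r, (f i:ℤ)) < ∑ i : Fin r, (g i:ℤ) := by exact_mod_cast hlt
        linarith
      have hBr : (B:ℤ)^r = (B:ℤ)^(r-1) * B := by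
        rw [← pow_succ]; congr 1; omega
      have hrdb : (r:ℤ) * D < B := by exact_mod_cast hB
      have hp1 : (0:ℤ) < (B:ℤ)^(r-1) := pow_pos (by linarith) _
      have hfinal : (0:ℤ) < (∑ i : Fin r, ((g i:ℤ) - f i)) * (B:ℤ)^r - (r:ℤ) * ((D:ℤ) * (B:ℤ)^(r-1)) := by
        rw [hBr]
        nlinarith [mul_le_mul_of_nonneg_right hdiff (le_of_lt (mul_pos hp1 (by linarith : (0:ℤ) < (B:ℤ))))]
      rw [hL] at hsum; linarith
    · -- lex case
      obtain ⟨j, hpre, hj⟩ := hlex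
      have hsz : (∑ i : Fin r, ((g i:ℤ) - f i)) = 0 := by
        rw [Finset.sum_sub_distrib]
        have h1 : (∑ i : Fin r, (f i:ℤ)) = ∑ i : Fin r, (g i:ℤ) := by exact_mod_cast hs
        linarith
      have hsplit : ∑ i : Fin r, ((g i : ℤ) - (f i : ℤ)) * ((B:ℤ)^r + (B:ℤ)^(r-1-i.1))
          = ∑ i : Fin r, ((g i : ℤ) - (f i : ℤ)) * (B:ℤ)^(r-1-i.1) := by
        simp only [mul_add]
        rw [Finset.sum_add_distrib, ← Finset.sum_mul, hsz]
        ring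
      rw [hsplit]
      have hj1 : (1:ℤ) ≤ (g j : ℤ) - f j := by
        have : (f j : ℤ) < g j := by exact_mod_cast hj
        linarith
      by_cases hjr : j.1 = r - 1
      · -- j is the last index
        have hz : ∀ i ∈ Finset.univ, i ≠ j → ((g i : ℤ) - (f i : ℤ)) * (B:ℤ)^(r-1-i.1) = 0 := by
          intro i _ hne
          have hij : i < j := by
            have : i.1 < r := i.2
            have : i.1 ≠ j.1 := fun hh => hne (Fin.ext hh)
            exact Fin.lt_def.2 (by omega)
          rw [hpre i hij]; ring
        rw [Finset.sum_eq_single_of_mem j (Finset.mem_univ j) hz]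
        have : (0:ℤ) < (B:ℤ)^(r-1-j.1) := pow_pos (by linarith) _
        nlinarith
      · -- j < r - 1
        have hjlt : j.1 < r - 1 := by have := j.2; omega
        set K : ℤ := (D:ℤ) * (B:ℤ)^(r-2-j.1) with hK
        have hK0 : 0 ≤ K := mul_nonneg (by positivity) (pow_nonneg hB0 _)
        set X : ℤ := (B:ℤ)^(r-1-j.1) with hX
        have hstep : ∀ i : Fin r,
            (if i = j then X + K else 0) - K ≤ ((g i : ℤ) - (f i : ℤ)) * (B:ℤ)^(r-1-i.1) := by
          intro i
          by_cases hij : i = j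
          · subst hij
            rw [if_pos rfl]
            have h0 : (0:ℤ) ≤ X := pow_nonneg hB0 _
            nlinarith
          · simp only [if_neg hij]
            rcases lt_or_gt_of_ne (fun hh : i = j => hij hh) with hlt' | hgt'
            · rw [hpre i hlt']
              simp only [sub_self, zero_mul]
              linarith
            · have hei : (B:ℤ)^(r-1-i.1) ≤ (B:ℤ)^(r-2-j.1) := by
                apply pow_le_pow_right₀ hB1
                have : j.1 < i.1 := hgt'
                omega
              have e0 : (0:ℤ) ≤ (B:ℤ)^(r-1-i.1) := pow_nonneg hB0 _
              have hfD : (f i : ℤ) ≤ D := by exact_mod_cast hf i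
              have hg0 : (0:ℤ) ≤ (g i : ℤ) := by positivity
              have hf0 : (0:ℤ) ≤ (f i : ℤ) := by positivity
              have hD0 : (0:ℤ) ≤ (D:ℤ) := by positivity
              nlinarith
        have hsum := Finset.sum_le_sum (fun i (_ : i ∈ Finset.univ) => hstep i)
        have hL : ∑ i : Fin r, ((if i = j then X + K else 0) - K)
            = (X + K) - (r:ℤ) * K := by
          rw [Finset.sum_sub_distrib, Finset.sum_ite_eq' Finset.univ j (fun _ => X + K),
            if_pos (Finset.mem_univ j), Finset.sum_const, card_univ, Fintype.card_fin,
            nsmul_eq_mul]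
        have hXK : (r:ℤ) * K < X + K := by
          have hXe : X = (B:ℤ) * (B:ℤ)^(r-2-j.1) := by
            rw [hX, ← pow_succ']; congr 1; omega
          have hrdb : (r:ℤ) * D < B := by exact_mod_cast hB
          have hp1 : (0:ℤ) < (B:ℤ)^(r-2-j.1) := pow_pos (by linarith) _
          have hr1 : (1:ℤ) ≤ (r:ℤ) := by exact_mod_cast hr
          rw [hXe, hK]
          nlinarith
        rw [hL] at hsum
        linarith
  have hgoal : (gW r B f : ℤ) < (gW r B g : ℤ) := by
    have hexp : ∀ h' : Fin r →₀ ℕ, (gW r B h' : ℤ) = ∑ i : Fin r, (h' i : ℤ) * ((B:ℤ)^r + (B:ℤ)^(r-1-i.1)) := by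
      intro h'
      rw [gW]
      push_cast [gw]
      rfl
    rw [hexp, hexp]
    have : ∑ i : Fin r, ((g i : ℤ) - (f i : ℤ)) * ((B:ℤ)^r + (B:ℤ)^(r-1-i.1))
        = (∑ i : Fin r, (g i : ℤ) * ((B:ℤ)^r + (B:ℤ)^(r-1-i.1)))
          - ∑ i : Fin r, (f i : ℤ) * ((B:ℤ)^r + (B:ℤ)^(r-1-i.1)) := by
      rw [← Finset.sum_sub_distrib]; apply Finset.sum_congr rfl; intro i _; ring
    rw [this] at key
    linarith
  exact_mod_cast hgoal

set_option maxHeartbeats 1000000 in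
/-- let `P ∈ ℚ[t_1,…,t_r]` be nonzero, `C ⊆ ℝ^r` a convex cone whose interior
contains `e_1`, and `p ∈ ℝ^r`.  If `P(t) ≥ 0` for every lattice point `t ∈ p + C`, then the
coefficient of the glex-leading monomial of `P` is positive. -/
theorem leading_coeff_pos_of_nonneg_on_cone {r : ℕ} (hr : 0 < r)
    (P : MvPolynomial (Fin r) ℚ) (hP : P ≠ 0)
    (C : Set (Fin r → ℝ)) (hconv : Convex ℝ C)
    (hcone : ∀ x ∈ C, ∀ c : ℝ, 0 < c → c • x ∈ C)
    (he : (Pi.single (⟨0, hr⟩ : Fin r) (1 : ℝ)) ∈ interior C)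
    (p : Fin r → ℝ)
    (hpos : ∀ t : Fin r → ℤ, ((fun i => (t i : ℝ)) - p) ∈ C →
      0 ≤ MvPolynomial.eval (fun i => (t i : ℚ)) P) :
    ∃ μ ∈ P.support, (∀ ν ∈ P.support, ν ≠ μ → glexLt ν μ) ∧ 0 < P.coeff μ := by
  classical
  set D := P.totalDegree with hD
  set B := r * D + 2 with hB
  have hBgt : r * D < B := by omega
  have hB2 : 2 ≤ B := by omega
  set i0 : Fin r := ⟨0, hr⟩ with hi0
  set w : Fin r → ℕ := gw r B with hw
  -- leading monomial
  have hsupp : P.support.Nonempty := Finset.nonempty_iff_ne_empty.2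
    (fun hh => hP (MvPolynomial.support_eq_empty.1 hh))
  obtain ⟨μ, hμ, hmax⟩ := P.support.exists_max_image (gW r B) hsupp
  have hbound : ∀ ν ∈ P.support, ∀ i, ν i ≤ D := by
    intro ν hν i
    exact le_trans (coord_le_sum ν i) (MvPolynomial.le_totalDegree hν)
  have hglex : ∀ ν ∈ P.support, ν ≠ μ → glexLt ν μ := by
    intro ν hν hne
    rcases glex_tri ν μ hne with h | h
    · exact h
    · exact absurd (gW_lt hr hBgt hB2 μ ν (hbound μ hμ) h) (not_lt.2 (hmax ν hν))
  have hWlt : ∀ ν ∈ P.support, ν ≠ μ → gW r B ν < gW r B μ := fun ν hν hne =>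
    gW_lt hr hBgt hB2 ν μ (hbound ν hν) (hglex ν hν hne)
  refine ⟨μ, hμ, hglex, ?_⟩
  by_contra hc
  push_neg at hc
  have hc0 : P.coeff μ ≠ 0 := MvPolynomial.mem_support_iff.1 hμ
  have hcneg : P.coeff μ < 0 := lt_of_le_of_ne hc hc0
  set c : ℚ := P.coeff μ with hcdef
  set S : ℚ := ∑ ν ∈ P.support.erase μ, |P.coeff ν| with hS
  have hS0 : 0 ≤ S := Finset.sum_nonneg (fun ν _ => abs_nonneg _)
  set A : ℝ := ∑ i, |p i| with hA
  have hAb : ∀ i, |p i| ≤ A :=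
    fun i => Finset.single_le_sum (f := fun i => |p i|) (fun j _ => abs_nonneg _) (Finset.mem_univ i)
  have hA0 : 0 ≤ A := Finset.sum_nonneg (fun i _ => abs_nonneg _)
  obtain ⟨ε, hε, hball'⟩ := Metric.isOpen_iff.1 isOpen_interior _ he
  have hball : Metric.ball (Pi.single i0 (1:ℝ)) ε ⊆ C := hball'.trans interior_subset
  -- properties of w
  have hw1 : 1 ≤ w i0 := by
    have : 0 < B ^ r := pow_pos (by omega) r
    simp only [hw, gw]
    omega
  have hwlt : ∀ i, i ≠ i0 → w i < w i0 := by
    intro i hi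
    have hi1 : 1 ≤ i.1 := by
      rcases Nat.eq_zero_or_pos i.1 with h0 | h0
      · exact absurd (Fin.ext h0) hi
      · exact h0
    have hir : i.1 < r := i.2
    simp only [hw, gw, hi0]
    have : B ^ (r - 1 - i.1) < B ^ (r - 1 - 0) :=
      Nat.pow_lt_pow_right (by omega) (by omega)
    omega
  -- choose n
  obtain ⟨n, hn⟩ := exists_nat_gt (max (max ((S / (-c) : ℚ) : ℝ) ((1 + A)/ε)) 1)
  have hn1 : 1 ≤ n := by
    have h1 : (1:ℝ) < n := lt_of_le_of_lt (le_max_right _ _) hn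
    exact_mod_cast h1.le
  have hn2 : c * n + S < 0 := by
    have h1 : ((S / (-c) : ℚ) : ℝ) < n := lt_of_le_of_lt ((le_max_left _ _).trans (le_max_left _ _)) hn
    have h2 : (S / (-c) : ℚ) < (n : ℚ) := by exact_mod_cast h1
    have hcpos : (0:ℚ) < -c := by linarith
    rw [div_lt_iff₀ hcpos] at h2
    linarith
  have hn3 : 1 + A < ε * n := by
    have h1 : (1 + A)/ε < n := lt_of_le_of_lt ((le_max_right _ _).trans (le_max_left _ _)) hn
    rw [div_lt_iff₀ hε] at h1
    linarith
  set t : Fin r → ℤ := fun i => (n:ℤ)^(w i) with ht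
  -- membership in the cone
  have hmem : ((fun i => (t i : ℝ)) - p) ∈ C := by
    have hnR : (1:ℝ) ≤ (n:ℝ) := by exact_mod_cast hn1
    have hnpos : (0:ℝ) < n := by linarith
    set N : ℝ := (n:ℝ)^(w i0) with hN
    have hNpos : 0 < N := pow_pos hnpos _
    have hNn : (n:ℝ) ≤ N := by
      calc (n:ℝ) = (n:ℝ)^1 := (pow_one _).symm
      _ ≤ N := pow_le_pow_right₀ hnR hw1
    have hy : ((fun i => (t i : ℝ)) - p) = N • (fun i => ((n:ℝ)^(w i) - p i)/N) := by
      funext i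
      simp only [Pi.sub_apply, Pi.smul_apply, smul_eq_mul, ht]
      push_cast
      field_simp
    rw [hy]
    refine hcone _ ?_ N hNpos
    apply hball
    rw [Metric.mem_ball, dist_pi_lt_iff hε]
    intro i
    rw [Real.dist_eq]
    by_cases hi : i = i0
    · rw [hi, Pi.single_eq_same, ← hN]
      have heq : (N - p i0)/N - 1 = -p i0 / N := by field_simp; ring
      rw [heq, abs_div, abs_neg, abs_of_pos hNpos, div_lt_iff₀ hNpos]
      have h1 : |p i0| ≤ A := hAb i0
      nlinarith
    · rw [Pi.single_eq_of_ne hi, sub_zero, abs_div, abs_of_pos hNpos, div_lt_iff₀ hNpos]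
      have hsub : |(n:ℝ)^(w i) - p i| ≤ (n:ℝ)^(w i) + A := by
        calc |(n:ℝ)^(w i) - p i| ≤ |(n:ℝ)^(w i)| + |p i| := abs_sub _ _
        _ ≤ (n:ℝ)^(w i) + A := by
            rw [abs_of_nonneg (by positivity)]
            linarith [hAb i]
      have hle : (n:ℝ)^(w i) * (n:ℝ) ≤ N := by
        rw [hN, ← pow_succ]
        exact pow_le_pow_right₀ hnR (by have := hwlt i hi; omega)
      have h2 : (n:ℝ)^(w i) + A ≤ N / n + A := by
        have : (n:ℝ)^(w i) ≤ N / n := by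
          rw [le_div_iff₀ hnpos]; exact hle
        linarith
      have h3 : N / n + A < ε * N := by
        rw [div_add' _ _ _ (ne_of_gt hnpos), div_lt_iff₀ hnpos]
        have hAn : A * n ≤ A * N := by nlinarith
        have : (1 + A) * N < (ε * n) * N := by nlinarith
        nlinarith
      linarith
  have h0 : 0 ≤ MvPolynomial.eval (fun i => (t i : ℚ)) P := hpos t hmem
  -- evaluation formula
  have heval : MvPolynomial.eval (fun i => (t i : ℚ)) P
      = ∑ ν ∈ P.support, P.coeff ν * (n:ℚ)^(gW r B ν) := by
    rw [MvPolynomial.eval_eq']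
    apply Finset.sum_congr rfl
    intro ν _
    congr 1
    have hterm : ∀ i : Fin r, ((t i : ℚ)) ^ ν i = (n:ℚ) ^ (ν i * w i) := by
      intro i
      simp only [ht]
      push_cast
      rw [← pow_mul, mul_comm]
    simp_rw [hterm]
    rw [Finset.prod_pow_eq_pow_sum]
    rfl
  -- estimate
  have hq1 : 1 ≤ (n:ℚ) := by exact_mod_cast hn1
  have hq0 : (0:ℚ) < n := by linarith
  set q : ℚ := (n:ℚ) with hq
  set e : ℕ := gW r B μ with he'
  have htermle : ∀ ν ∈ P.support.erase μ,
      P.coeff ν * q^(gW r B ν) ≤ |P.coeff ν| * (q^e / q) := by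
    intro ν hν
    have hν' : ν ∈ P.support := Finset.mem_of_mem_erase hν
    have hne : ν ≠ μ := Finset.ne_of_mem_erase hν
    have hlt : gW r B ν < e := hWlt ν hν' hne
    have hple : q^(gW r B ν) ≤ q^e / q := by
      rw [le_div_iff₀ hq0, ← pow_succ]
      exact pow_le_pow_right₀ hq1 (by omega)
    calc P.coeff ν * q^(gW r B ν) ≤ |P.coeff ν| * q^(gW r B ν) := by
          apply mul_le_mul_of_nonneg_right (le_abs_self _) (by positivity)
    _ ≤ |P.coeff ν| * (q^e / q) := by
          apply mul_le_mul_of_nonneg_left hple (abs_nonneg _)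
  have hsum2 : ∑ ν ∈ P.support.erase μ, P.coeff ν * q^(gW r B ν) ≤ S * (q^e / q) := by
    calc ∑ ν ∈ P.support.erase μ, P.coeff ν * q^(gW r B ν)
        ≤ ∑ ν ∈ P.support.erase μ, |P.coeff ν| * (q^e / q) := Finset.sum_le_sum htermle
    _ = S * (q^e / q) := by rw [hS, Finset.sum_mul]
  have hsplit : ∑ ν ∈ P.support, P.coeff ν * q^(gW r B ν)
      = c * q^e + ∑ ν ∈ P.support.erase μ, P.coeff ν * q^(gW r B ν) := by
    rw [← Finset.add_sum_erase _ _ hμ]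
  have hfinal : MvPolynomial.eval (fun i => (t i : ℚ)) P < 0 := by
    rw [heval, hsplit]
    have hqe : (0:ℚ) < q^e := pow_pos hq0 _
    have h1 : c * q^e + S * (q^e / q) = (q^e / q) * (c * q + S) := by
      field_simp
    have h2 : (q^e / q) * (c * q + S) < 0 :=
      mul_neg_of_pos_of_neg (by positivity) hn2
    linarith [hsum2]
  linarith
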